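/- Let B be a finite set with |B| ≥ 5, and consider configurations x : ℤ → Bool × B. Define the partial shift s by s(x)(i) = ((x(i+1)).1, (x(i)).2), and for a ∈ Bool and an even permutation π of B define f_{a,π} by f_{a,π}(x)(i) = ((x(i)).1, π((x(i)).2)) if (x(i)).1 = a, and f_{a,π}(x)(i) = x(i) otherwise. Let G be the subgroup of the group of bijections of ℤ → Bool × B generated by s together with all the f_{a,π}. Then there exists a group homomorphism φ : G → ℤ such that φ(s) = 1 and φ(f_{a,π}) = 0 for all a ∈ Bool and all even permutations π of B, and every finitely generated subgroup of the kernel of φ is finite (i.e. G is (locally finite)-by-ℤ). -/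

import Mathlib

/-- A permutation of `ℤ → Bool × B` is the partial shift `s` if it shifts the first
(`Bool`) track and fixes the second (`B`) track. -/
def IsPartialShift {B : Type*} (σ : Equiv.Perm (ℤ → Bool × B)) : Prop :=
  ∀ (x : ℤ → Bool × B) (i : ℤ), σ x i = ((x (i + 1)).1, (x i).2)

/-- A permutation of `ℤ → Bool × B` is one of the maps `f_{a,π}` (`a ∈ Bool`, `π` an
even permutation of `B`) if it applies `π` cellwise on the second track exactly at the
cells whose first-track symbol equals `a`. -/
def IsSymbolMap {B : Type*} [Fintype B] [DecidableEq B]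
    (σ : Equiv.Perm (ℤ → Bool × B)) : Prop :=
  ∃ (a : Bool) (π : Equiv.Perm B), π ∈ alternatingGroup B ∧
    ∀ (x : ℤ → Bool × B) (i : ℤ),
      σ x i = if (x i).1 = a then ((x i).1, π ((x i).2)) else x i

/-- The group `G` generated by the partial shift and the maps `f_{a,π}`. -/
def genGroup (B : Type*) [Fintype B] [DecidableEq B] :
    Subgroup (Equiv.Perm (ℤ → Bool × B)) :=
  Subgroup.closure {τ : Equiv.Perm (ℤ → Bool × B) | IsPartialShift τ ∨ IsSymbolMap τ}

set_option linter.unusedSectionVars false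

namespace Stmt12Aux

variable {B : Type*} [Fintype B] [DecidableEq B]

def Loc (n : ℤ) (S : Finset ℤ) (g : Equiv.Perm (ℤ → Bool × B)) : Prop :=
  ∃ F : (ℤ → Bool) → Equiv.Perm B,
    (∀ u v : ℤ → Bool, (∀ j ∈ S, u j = v j) → F u = F v) ∧
    ∀ (x : ℤ → Bool × B) (i : ℤ),
      g x i = ((x (i + n)).1, F (fun j => (x (i + j)).1) ((x i).2))

theorem loc_mono {n : ℤ} {S T : Finset ℤ} {g : Equiv.Perm (ℤ → Bool × B)}
    (hST : S ⊆ T) (h : Loc n S g) : Loc n T g := by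
  obtain ⟨F, hF, hfor⟩ := h
  exact ⟨F, fun u v h => hF u v (fun j hj => h j (hST hj)), hfor⟩

theorem loc_one : Loc (B := B) 0 ∅ 1 :=
  ⟨fun _ => 1, fun _ _ _ => rfl, fun x i => by simp⟩

theorem loc_mul {n m : ℤ} {S T : Finset ℤ} {g h : Equiv.Perm (ℤ → Bool × B)}
    (hg : Loc n S g) (hh : Loc m T h) :
    Loc (n + m) (S.image (· + m) ∪ T) (g * h) := by
  obtain ⟨F, hF, hFor⟩ := hg
  obtain ⟨G, hG, hGor⟩ := hh
  refine ⟨fun u => F (fun j => u (j + m)) * G u, ?_, ?_⟩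
  · intro u v huv
    have h1 : F (fun j => u (j + m)) = F (fun j => v (j + m)) :=
      hF _ _ fun j hj => huv (j + m) (Finset.mem_union_left _ (Finset.mem_image_of_mem _ hj))
    have h2 : G u = G v := hG _ _ fun j hj => huv j (Finset.mem_union_right _ hj)
    dsimp only
    rw [h1, h2]
  · intro x i
    have e1 : (g * h) x i = g (h x) i := rfl
    rw [e1, hFor (h x) i]
    have f1 : ((h x) (i + n)).1 = (x (i + (n + m))).1 := by
      rw [hGor x (i + n)]; dsimp only; rw [add_assoc]
    have f2 : (fun j => ((h x) (i + j)).1) = fun j => (x (i + (j + m))).1 := by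
      funext j; rw [hGor x (i + j)]; dsimp only; rw [add_assoc]
    have f3 : ((h x) i).2 = G (fun j => (x (i + j)).1) ((x i).2) := by
      rw [hGor x i]
    rw [f1, f2, f3]
    simp [Equiv.Perm.mul_apply]

theorem loc_inv {n : ℤ} {S : Finset ℤ} {g : Equiv.Perm (ℤ → Bool × B)}
    (hg : Loc n S g) : Loc (-n) (S.image (· - n)) g⁻¹ := by
  obtain ⟨F, hF, hFor⟩ := hg
  refine ⟨fun u => (F (fun j => u (j - n)))⁻¹, ?_, ?_⟩
  · intro u v huv
    have : F (fun j => u (j - n)) = F (fun j => v (j - n)) :=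
      hF _ _ fun j hj => huv (j - n) (Finset.mem_image_of_mem _ hj)
    dsimp only
    rw [this]
  · intro y i
    set x := g⁻¹ y with hx
    have hgy : g x = y := by rw [hx]; exact Equiv.Perm.eq_inv_iff_eq.mp rfl
    have key : ∀ k, y k = ((x (k + n)).1, F (fun j => (x (k + j)).1) ((x k).2)) := by
      intro k; rw [← hgy]; exact hFor x k
    have fst : ∀ k, (x k).1 = (y (k - n)).1 := by
      intro k; rw [key (k - n)]; simp
    have snd : (y i).2 = F (fun j => (x (i + j)).1) ((x i).2) := by rw [key i]
    have win : (fun j => (x (i + j)).1) = fun j => (y (i + (j - n))).1 := by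
      funext j
      have e : i + j - n = i + (j - n) := by ring
      rw [fst (i + j), e]
    show x i = _
    refine Prod.ext ?_ ?_
    · rw [fst i]; dsimp only; rw [sub_eq_add_neg]
    · dsimp only
      rw [snd, win]
      simp

theorem loc_shift_unique (b : B) {n m : ℤ} {S T : Finset ℤ} {g : Equiv.Perm (ℤ → Bool × B)}
    (hg : Loc n S g) (hg' : Loc m T g) : n = m := by
  obtain ⟨F, _, hFor⟩ := hg
  obtain ⟨G, _, hGor⟩ := hg'
  set x : ℤ → Bool × B := fun j => (decide (j = n), b) with hx
  have h1 := hFor x 0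
  have h2 := hGor x 0
  have h3 : (x (0 + n)).1 = (x (0 + m)).1 := by
    rw [← congrArg Prod.fst h1, ← congrArg Prod.fst h2]
  simp [hx] at h3
  omega

theorem loc_of_isPartialShift {σ : Equiv.Perm (ℤ → Bool × B)}
    (h : IsPartialShift σ) : Loc 1 ∅ σ :=
  ⟨fun _ => 1, fun _ _ _ => rfl, fun x i => by rw [h x i]; rfl⟩

theorem loc_of_isSymbolMap {σ : Equiv.Perm (ℤ → Bool × B)}
    (h : IsSymbolMap σ) : Loc 0 {0} σ := by
  obtain ⟨a, π, _, hfor⟩ := h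
  refine ⟨fun u => if u 0 = a then π else 1, ?_, ?_⟩
  · intro u v huv
    have : u 0 = v 0 := huv 0 (Finset.mem_singleton_self 0)
    dsimp only
    rw [this]
  · intro x i
    rw [hfor x i]
    by_cases hxa : (x i).1 = a
    · simp [hxa]
    · simp [hxa]

theorem exists_loc {g : Equiv.Perm (ℤ → Bool × B)} (hg : g ∈ genGroup B) :
    ∃ n S, Loc n S g := by
  induction hg using Subgroup.closure_induction with
  | mem τ hτ =>
    rcases hτ with h | h
    · exact ⟨1, ∅, loc_of_isPartialShift h⟩
    · exact ⟨0, {0}, loc_of_isSymbolMap h⟩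
  | one => exact ⟨0, ∅, loc_one⟩
  | mul g h _ _ ihg ihh =>
    obtain ⟨n, S, hg'⟩ := ihg; obtain ⟨m, T, hh'⟩ := ihh
    exact ⟨_, _, loc_mul hg' hh'⟩
  | inv g _ ih =>
    obtain ⟨n, S, h⟩ := ih
    exact ⟨_, _, loc_inv h⟩

end Stmt12Aux

open Stmt12Aux

/-- Let `B` be finite with `|B| ≥ 5` and let `G` be the group of
bijections of `ℤ → Bool × B` generated by the partial shift `s` and the maps `f_{a,π}`.
Then there is a homomorphism `φ : G → ℤ` with `φ(s) = 1` and `φ(f_{a,π}) = 0` whose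
kernel is locally finite; i.e. `G` is (locally finite)-by-`ℤ`. -/
theorem stmt12 {B : Type*} [Fintype B] [DecidableEq B]
    (hB : 5 ≤ Fintype.card B) :
    ∃ φ : ↥(genGroup B) →* Multiplicative ℤ,
      (∀ (σ : Equiv.Perm (ℤ → Bool × B)) (hσ : σ ∈ genGroup B),
        IsPartialShift σ → φ ⟨σ, hσ⟩ = Multiplicative.ofAdd 1) ∧
      (∀ (σ : Equiv.Perm (ℤ → Bool × B)) (hσ : σ ∈ genGroup B),
        IsSymbolMap σ → φ ⟨σ, hσ⟩ = 1) ∧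
      (∀ K : Subgroup ↥(genGroup B), K ≤ φ.ker → K.FG → (K : Set ↥(genGroup B)).Finite) := by
  obtain ⟨b⟩ : Nonempty B := Fintype.card_pos_iff.mp (by omega)
  have hex : ∀ g : ↥(genGroup B), ∃ n S, Loc n S (g : Equiv.Perm (ℤ → Bool × B)) :=
    fun g => exists_loc g.2
  choose deg Sg hloc using hex
  have huniq : ∀ (g : ↥(genGroup B)) (n : ℤ) (S : Finset ℤ),
      Loc n S (g : Equiv.Perm (ℤ → Bool × B)) → deg g = n :=
    fun g n S h => loc_shift_unique b (hloc g) h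
  have hmul : ∀ g h : ↥(genGroup B),
      Multiplicative.ofAdd (deg (g * h)) =
        Multiplicative.ofAdd (deg g) * Multiplicative.ofAdd (deg h) := by
    intro g h
    have : deg (g * h) = deg g + deg h := huniq _ _ _ (loc_mul (hloc g) (hloc h))
    rw [this]; rfl
  set φ : ↥(genGroup B) →* Multiplicative ℤ :=
    MonoidHom.mk' (fun g => Multiplicative.ofAdd (deg g)) hmul with hφ
  have hφapp : ∀ g : ↥(genGroup B), φ g = Multiplicative.ofAdd (deg g) := fun g => rfl
  refine ⟨φ, ?_, ?_, ?_⟩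
  · intro σ hσ h
    rw [hφapp, huniq ⟨σ, hσ⟩ 1 ∅ (loc_of_isPartialShift h)]
  · intro σ hσ h
    rw [hφapp, huniq ⟨σ, hσ⟩ 0 {0} (loc_of_isSymbolMap h)]
    rfl
  · intro K hK hFG
    obtain ⟨A, hA⟩ := hFG
    set R : Finset ℤ := A.sup Sg with hR
    -- the subgroup of 0-shift, R-local elements
    have mul_mem' : ∀ {g h : ↥(genGroup B)},
        Loc 0 R (g : Equiv.Perm (ℤ → Bool × B)) →
        Loc 0 R (h : Equiv.Perm (ℤ → Bool × B)) →
        Loc 0 R ((g * h : ↥(genGroup B)) : Equiv.Perm (ℤ → Bool × B)) := by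
      intro g h hg hh
      have hs : R.image (· + (0 : ℤ)) ∪ R ⊆ R := by
        intro j hj
        simp only [Finset.mem_union, Finset.mem_image] at hj
        rcases hj with ⟨k, hk, rfl⟩ | hj
        · simpa using hk
        · exact hj
      have := loc_mono hs (loc_mul hg hh)
      simpa using this
    have inv_mem' : ∀ {g : ↥(genGroup B)},
        Loc 0 R (g : Equiv.Perm (ℤ → Bool × B)) →
        Loc 0 R ((g⁻¹ : ↥(genGroup B)) : Equiv.Perm (ℤ → Bool × B)) := by
      intro g hg
      have hs : R.image (· - (0 : ℤ)) ⊆ R := by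
        intro j hj
        simp only [Finset.mem_image] at hj
        obtain ⟨k, hk, rfl⟩ := hj
        simpa using hk
      have := loc_mono hs (loc_inv hg)
      simpa using this
    set L : Subgroup ↥(genGroup B) :=
      { carrier := {g : ↥(genGroup B) | Loc 0 R (g : Equiv.Perm (ℤ → Bool × B))}
        one_mem' := loc_mono (Finset.empty_subset R) loc_one
        mul_mem' := fun hg hh => mul_mem' hg hh
        inv_mem' := fun hg => inv_mem' hg } with hL
    have memL : ∀ g : ↥(genGroup B),
        g ∈ L ↔ Loc 0 R (g : Equiv.Perm (ℤ → Bool × B)) := fun g => Iff.rfl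
    have hKL : K ≤ L := by
      rw [← hA]
      refine (Subgroup.closure_le _).mpr ?_
      intro a ha
      have haK : a ∈ K := hA ▸ Subgroup.subset_closure ha
      have h0 : deg a = 0 := by
        have := hK haK
        rw [MonoidHom.mem_ker, hφapp] at this
        exact ofAdd_eq_one.mp this
      have hl := hloc a
      rw [h0] at hl
      exact loc_mono (Finset.le_sup (Finset.mem_coe.mp ha)) hl
    -- L is finite
    have hLfin : (L : Set ↥(genGroup B)).Finite := by
      rw [← Set.finite_coe_iff]
      classical
      let ext : ({ j : ℤ // j ∈ R } → Bool) → (ℤ → Bool) :=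
        fun u j => if h : j ∈ R then u ⟨j, h⟩ else false
      let J : ↥L → (({ j : ℤ // j ∈ R } → Bool) → Equiv.Perm B) :=
        fun g => fun u => ((memL g.1).mp g.2).choose (ext u)
      have hJ : Function.Injective J := by
        intro g g' hgg
        have hg := (memL g.1).mp g.2
        have hg' := (memL g'.1).mp g'.2
        obtain ⟨hFdep, hFor⟩ := hg.choose_spec
        obtain ⟨hGdep, hGor⟩ := hg'.choose_spec
        have key : ∀ w : ℤ → Bool, hg.choose w = hg'.choose w := by
          intro w
          have e1 : hg.choose w = hg.choose (ext fun j : { j : ℤ // j ∈ R } => w j) := by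
            refine hFdep _ _ fun j hj => ?_
            simp [ext, hj]
          have e2 : hg'.choose w = hg'.choose (ext fun j : { j : ℤ // j ∈ R } => w j) := by
            refine hGdep _ _ fun j hj => ?_
            simp [ext, hj]
          rw [e1, e2]
          have h3 := congrFun hgg (fun j : { j : ℤ // j ∈ R } => w j)
          simp only [J] at h3
          exact h3
        have : (g.1 : Equiv.Perm (ℤ → Bool × B)) = (g'.1 : Equiv.Perm (ℤ → Bool × B)) := by
          refine Equiv.ext fun x => funext fun i => ?_
          rw [hFor x i, hGor x i, key]
        ext1
        exact Subtype.ext this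
      haveI : Finite (({ j : ℤ // j ∈ R } → Bool) → Equiv.Perm B) := by infer_instance
      exact Finite.of_injective J hJ
    exact hLfin.subset hKL
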